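/- Fix the iteration map I(c) := (1 - λ/2)·Φ'(c)/(1-Φ(c)) for 0 < λ < 2. Then I is strictly increasing on ℝ, I(0) > 0, its unique fixed point on [0,∞) is κ (the solution of g(κ)=1-λ/2), and: if 0 < c < κ then c < I(c) < κ, while if c > κ then κ < I(c) < c. Consequently the iterates c_k = I^{(k)}(c₀) converge monotonically to κ from any c₀ ≥ 0. -/

import Mathlib

open Real MeasureTheory Filter

noncomputable def Phi (x : ℝ) : ℝ := ∫ t in Set.Iic x, (Real.sqrt (2 * Real.pi))⁻¹ * Real.exp (-t ^ 2 / 2)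

noncomputable def phi (x : ℝ) : ℝ := (Real.sqrt (2 * Real.pi))⁻¹ * Real.exp (-x ^ 2 / 2)

noncomputable def g (κ : ℝ) : ℝ := κ * (1 - Phi κ) / phi κ

/-- The iteration map I(c) = (1-λ/2)·Φ'(c)/(1-Φ(c)). -/
noncomputable def Imap (lam c : ℝ) : ℝ := (1 - lam / 2) * phi c / (1 - Phi c)

open Set

lemma phi_pos (x : ℝ) : 0 < phi x := by
  unfold phi
  have : 0 < Real.sqrt (2 * Real.pi) := Real.sqrt_pos.2 (by positivity)
  positivity

lemma phi_cont : Continuous phi := by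
  unfold phi; fun_prop

lemma phi_eq (x : ℝ) : phi x = (Real.sqrt (2*Real.pi))⁻¹ * Real.exp (-(2⁻¹) * x^2) := by
  unfold phi; ring_nf

lemma phi_integrable : Integrable phi := by
  have h : Integrable (fun x : ℝ => Real.exp (-(2⁻¹) * x^2)) := integrable_exp_neg_mul_sq (by norm_num)
  have := h.const_mul ((Real.sqrt (2*Real.pi))⁻¹)
  exact this.congr (by filter_upwards with x; rw [phi_eq])

lemma integral_phi : ∫ x, phi x = 1 := by
  have h : ∫ x : ℝ, Real.exp (-(2⁻¹) * x^2) = Real.sqrt (Real.pi / 2⁻¹) := integral_gaussian _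
  have h2 : (Real.pi / 2⁻¹) = 2 * Real.pi := by ring
  have hne : Real.sqrt (2 * Real.pi) ≠ 0 := ne_of_gt (Real.sqrt_pos.2 (by positivity))
  calc ∫ x, phi x = ∫ x : ℝ, (Real.sqrt (2*Real.pi))⁻¹ * Real.exp (-(2⁻¹) * x^2) := by
        congr 1; funext x; rw [phi_eq]
    _ = (Real.sqrt (2*Real.pi))⁻¹ * ∫ x : ℝ, Real.exp (-(2⁻¹) * x^2) := MeasureTheory.integral_const_mul _ _
    _ = 1 := by rw [h, h2, inv_mul_cancel₀ hne]

lemma Phi_eq (x : ℝ) : Phi x = ∫ t in Set.Iic x, phi t := rfl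

lemma Phi_add_Ioi (x : ℝ) : Phi x + ∫ t in Set.Ioi x, phi t = 1 := by
  rw [Phi_eq, intervalIntegral.integral_Iic_add_Ioi phi_integrable.integrableOn phi_integrable.integrableOn,
    integral_phi]

lemma setIntegral_phi_pos (x : ℝ) : 0 < ∫ t in Set.Ioi x, phi t := by
  rw [MeasureTheory.setIntegral_pos_iff_support_of_nonneg_ae
    (Filter.Eventually.of_forall (fun t => (phi_pos t).le)) phi_integrable.integrableOn]
  have : Function.support phi = Set.univ := by
    ext t; simp [Function.mem_support, (phi_pos t).ne']
  rw [this, Set.univ_inter]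
  simp [Real.volume_Ioi]

lemma Phi_lt_one (x : ℝ) : Phi x < 1 := by
  have := Phi_add_Ioi x
  nlinarith [setIntegral_phi_pos x]

lemma one_sub_Phi_pos (x : ℝ) : 0 < 1 - Phi x := by linarith [Phi_lt_one x]

lemma one_sub_Phi (x : ℝ) : 1 - Phi x = ∫ t in Set.Ioi x, phi t := by
  linarith [Phi_add_Ioi x]

lemma hasDerivAt_Phi (x : ℝ) : HasDerivAt Phi (phi x) x := by
  have key : ∀ y : ℝ, Phi y = Phi 0 + ∫ t in (0:ℝ)..y, phi t := by
    intro y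
    have := intervalIntegral.integral_Iic_sub_Iic (f := phi) (μ := volume) (a := (0:ℝ)) (b := y)
      phi_integrable.integrableOn phi_integrable.integrableOn
    rw [Phi_eq, Phi_eq]; linarith
  have h : HasDerivAt (fun y => Phi 0 + ∫ t in (0:ℝ)..y, phi t) (phi x) x := by
    exact (phi_cont.integral_hasStrictDerivAt 0 x).hasDerivAt.const_add _
  exact h.congr_deriv rfl |>.congr_of_eventuallyEq (Filter.Eventually.of_forall key) |>.congr_deriv rfl

lemma hasDerivAt_phi (x : ℝ) : HasDerivAt phi (-x * phi x) x := by
  have h1 : HasDerivAt (fun t : ℝ => -t^2/2) (-x) x := by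
    have := ((hasDerivAt_pow 2 x).neg).div_const 2
    simpa using this.congr_deriv (by ring)
  have h2 := h1.exp
  have h3 := h2.const_mul ((Real.sqrt (2*Real.pi))⁻¹)
  unfold phi
  refine h3.congr_deriv ?_
  ring

lemma integrable_mul_phi (c : ℝ) : IntegrableOn (fun t => t * phi t) (Set.Ioi c) := by
  have h : Integrable (fun x : ℝ => x * Real.exp (-(2⁻¹) * x^2)) :=
    integrable_mul_exp_neg_mul_sq (by norm_num)
  have := h.const_mul ((Real.sqrt (2*Real.pi))⁻¹)
  refine Integrable.integrableOn (this.congr ?_)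
  filter_upwards with x; rw [phi_eq]; ring

lemma tendsto_phi_atTop : Filter.Tendsto phi Filter.atTop (nhds 0) := by
  have h1 : Filter.Tendsto (fun x : ℝ => -x^2/2) Filter.atTop Filter.atBot := by
    apply Filter.Tendsto.atBot_div_const (by norm_num)
    exact Filter.tendsto_neg_atBot_iff.mpr (tendsto_pow_atTop two_ne_zero)
  have h2 : Filter.Tendsto (fun x : ℝ => Real.exp (-x^2/2)) Filter.atTop (nhds 0) :=
    Real.tendsto_exp_atBot.comp h1
  have h3 := h2.const_mul ((Real.sqrt (2*Real.pi))⁻¹)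
  rw [mul_zero] at h3
  exact h3.congr (fun x => rfl)

lemma integral_mul_phi (c : ℝ) : ∫ t in Set.Ioi c, t * phi t = phi c := by
  have := MeasureTheory.integral_Ioi_of_hasDerivAt_of_tendsto' (a := c)
    (f := fun t => -phi t) (f' := fun t => t * phi t)
    (fun x _ => by exact (hasDerivAt_phi x).neg.congr_deriv (by ring))
    (integrable_mul_phi c) (tendsto_phi_atTop.neg)
  simpa using this

lemma mills_upper (c : ℝ) : c * (1 - Phi c) < phi c := by
  rcases le_or_gt c 0 with hc | hc
  · have h1 := one_sub_Phi_pos c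
    nlinarith [phi_pos c]
  · have key : 0 < ∫ t in Set.Ioi c, (t - c) * phi t := by
      rw [MeasureTheory.setIntegral_pos_iff_support_of_nonneg_ae]
      · have hsub : Set.Ioi c ⊆ Function.support (fun t => (t - c) * phi t) ∩ Set.Ioi c := by
          intro t ht
          refine ⟨?_, ht⟩
          have h1 : 0 < t - c := by simp at ht; linarith
          have : 0 < (t - c) * phi t := mul_pos h1 (phi_pos t)
          exact Function.mem_support.2 this.ne'
        calc (0:ENNReal) < volume (Set.Ioi c) := by simp [Real.volume_Ioi]
          _ ≤ _ := measure_mono hsub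
      · rw [Filter.EventuallyLE, MeasureTheory.ae_restrict_iff' measurableSet_Ioi]
        filter_upwards with t ht
        have : c ≤ t := le_of_lt ht
        have := phi_pos t
        simp only [Pi.zero_apply]
        nlinarith
      · exact ((integrable_mul_phi c).sub
          ((phi_integrable.integrableOn.const_mul c))).congr
          (by filter_upwards with t; simp; ring)
    have hexp : ∫ t in Set.Ioi c, (t - c) * phi t
        = phi c - c * (1 - Phi c) := by
      have h1 : ∫ t in Set.Ioi c, (t - c) * phi t
          = (∫ t in Set.Ioi c, t * phi t) - c * ∫ t in Set.Ioi c, phi t := by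
        rw [← MeasureTheory.integral_const_mul,
          ← MeasureTheory.integral_sub (integrable_mul_phi c)
            (phi_integrable.integrableOn.const_mul c)]
        congr 1; funext t; ring
      rw [h1, integral_mul_phi, one_sub_Phi]
    linarith [hexp ▸ key]

lemma tendsto_mul_phi_atTop : Filter.Tendsto (fun c => c * phi c) Filter.atTop (nhds 0) := by
  have h0 : Filter.Tendsto (fun c : ℝ => c * Real.exp (-c)) Filter.atTop (nhds 0) := by
    simpa using Real.tendsto_pow_mul_exp_neg_atTop_nhds_zero 1
  have h1 : Filter.Tendsto (fun c : ℝ => (Real.sqrt (2*Real.pi))⁻¹ * (c * Real.exp (-c)))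
      Filter.atTop (nhds 0) := by simpa using h0.const_mul ((Real.sqrt (2*Real.pi))⁻¹)
  apply tendsto_of_tendsto_of_tendsto_of_le_of_le' tendsto_const_nhds h1
  · filter_upwards [Filter.eventually_ge_atTop (0:ℝ)] with c hc
    exact mul_nonneg hc (phi_pos c).le
  · filter_upwards [Filter.eventually_ge_atTop (2:ℝ)] with c hc
    have hsq : -c^2/2 ≤ -c := by nlinarith
    have := Real.exp_le_exp.2 hsq
    have hcpos : (0:ℝ) ≤ c := by linarith
    have hs : (0:ℝ) < (Real.sqrt (2*Real.pi))⁻¹ := by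
      simp only [inv_pos]; exact Real.sqrt_pos.2 (by positivity)
    unfold phi
    calc c * ((Real.sqrt (2*Real.pi))⁻¹ * Real.exp (-c^2/2))
        ≤ c * ((Real.sqrt (2*Real.pi))⁻¹ * Real.exp (-c)) := by
          apply mul_le_mul_of_nonneg_left _ hcpos
          exact mul_le_mul_of_nonneg_left this hs.le
      _ = (Real.sqrt (2*Real.pi))⁻¹ * (c * Real.exp (-c)) := by ring

lemma tendsto_sq_one_sub_Phi :
    Filter.Tendsto (fun c => (1 + c^2) * (1 - Phi c)) Filter.atTop (nhds 0) := by
  have h2 : Filter.Tendsto (fun c => 2 * (c * phi c)) Filter.atTop (nhds 0) := by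
    simpa using tendsto_mul_phi_atTop.const_mul 2
  apply tendsto_of_tendsto_of_tendsto_of_le_of_le' tendsto_const_nhds h2
  · filter_upwards with c
    have := one_sub_Phi_pos c
    nlinarith
  · filter_upwards [Filter.eventually_ge_atTop (1:ℝ)] with c hc
    have hm := mills_upper c
    have h1 := one_sub_Phi_pos c
    have hp := phi_pos c
    nlinarith

lemma hasDerivAt_millsf (c : ℝ) :
    HasDerivAt (fun c => (1 + c^2) * (1 - Phi c) - c * phi c)
      (2 * (c * (1 - Phi c) - phi c)) c := by
  have h1 : HasDerivAt (fun c : ℝ => 1 + c^2) (2*c) c := by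
    simpa using (hasDerivAt_pow 2 c).const_add 1
  have h2 : HasDerivAt (fun c => 1 - Phi c) (-phi c) c := by
    simpa using (hasDerivAt_Phi c).const_sub 1
  have h3 := (h1.mul h2).sub ((hasDerivAt_id c).mul (hasDerivAt_phi c))
  refine h3.congr_deriv ?_
  simp only [id]
  ring

lemma mills_lower (c : ℝ) : c * phi c < (1 + c^2) * (1 - Phi c) := by
  set f := fun c => (1 + c^2) * (1 - Phi c) - c * phi c with hf
  have hanti : StrictAnti f := by
    apply strictAnti_of_deriv_neg
    intro x
    rw [(hasDerivAt_millsf x).deriv]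
    have := mills_upper x
    nlinarith
  have hlim : Filter.Tendsto f Filter.atTop (nhds 0) := by
    simpa using tendsto_sq_one_sub_Phi.sub tendsto_mul_phi_atTop
  have h1 : 0 ≤ f (c + 1) := by
    apply le_of_tendsto hlim
    filter_upwards [Filter.eventually_ge_atTop (c+1)] with y hy
    exact hanti.antitone hy
  have := hanti (show c < c + 1 by linarith)
  simp only [hf] at *
  linarith

lemma hasDerivAt_g (c : ℝ) :
    HasDerivAt g (((1 + c^2) * (1 - Phi c) - c * phi c) / phi c) c := by
  have hu : HasDerivAt (fun c => c * (1 - Phi c)) ((1 - Phi c) - c * phi c) c := by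
    have := (hasDerivAt_id c).mul ((hasDerivAt_Phi c).const_sub 1)
    refine this.congr_deriv ?_
    simp only [id]; ring
  have h := hu.div (hasDerivAt_phi c) (phi_pos c).ne'
  refine h.congr_deriv ?_
  have hp := (phi_pos c).ne'
  field_simp
  ring

lemma g_strictMono : StrictMono g := by
  apply strictMono_of_deriv_pos
  intro x
  rw [(hasDerivAt_g x).deriv]
  exact div_pos (by linarith [mills_lower x]) (phi_pos x)

lemma hasDerivAt_Imap (lam c : ℝ) :
    HasDerivAt (Imap lam)
      ((1 - lam/2) * phi c * (phi c - c * (1 - Phi c)) / (1 - Phi c)^2) c := by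
  have hu : HasDerivAt (fun c => (1 - lam/2) * phi c) ((1 - lam/2) * (-c * phi c)) c :=
    (hasDerivAt_phi c).const_mul _
  have hv : HasDerivAt (fun c => 1 - Phi c) (-phi c) c := (hasDerivAt_Phi c).const_sub 1
  have h := hu.div hv (one_sub_Phi_pos c).ne'
  refine h.congr_deriv ?_
  congr 1
  ring

lemma Imap_strictMono (lam : ℝ) (h2 : lam < 2) : StrictMono (Imap lam) := by
  apply strictMono_of_deriv_pos
  intro x
  rw [(hasDerivAt_Imap lam x).deriv]
  have ha : 0 < 1 - lam/2 := by linarith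
  exact div_pos (mul_pos (mul_pos ha (phi_pos x)) (by linarith [mills_upper x]))
    (pow_pos (one_sub_Phi_pos x) 2)

lemma Imap_sub (lam c : ℝ) :
    Imap lam c - c = ((1 - lam/2) - g c) * (phi c / (1 - Phi c)) := by
  unfold Imap g
  have hp := (phi_pos c).ne'
  have h1 := (one_sub_Phi_pos c).ne'
  field_simp

lemma Imap_pos (lam c : ℝ) (h2 : lam < 2) : 0 < Imap lam c := by
  unfold Imap
  have ha : 0 < 1 - lam/2 := by linarith
  exact div_pos (mul_pos ha (phi_pos c)) (one_sub_Phi_pos c)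


/-- properties of the iteration map I and monotone convergence of its iterates
to the fixed point κ. -/
theorem stmt16 (lam κ : ℝ) (h0 : 0 < lam) (h2 : lam < 2) (hκpos : 0 < κ)
    (hκ : g κ = 1 - lam / 2) :
    StrictMono (Imap lam) ∧ 0 < Imap lam 0 ∧
    (∀ c : ℝ, 0 ≤ c → (Imap lam c = c ↔ c = κ)) ∧
    (∀ c : ℝ, 0 < c → c < κ → c < Imap lam c ∧ Imap lam c < κ) ∧
    (∀ c : ℝ, κ < c → κ < Imap lam c ∧ Imap lam c < c) ∧
    ∀ c₀ : ℝ, 0 ≤ c₀ →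
      Filter.Tendsto (fun k => (Imap lam)^[k] c₀) Filter.atTop (nhds κ) ∧
      (c₀ ≤ κ → Monotone fun k => (Imap lam)^[k] c₀) ∧
      (κ ≤ c₀ → Antitone fun k => (Imap lam)^[k] c₀) := by
  have ha : 0 < 1 - lam / 2 := by linarith
  have hSM := Imap_strictMono lam h2
  have hFcont : Continuous (Imap lam) :=
    continuous_iff_continuousAt.2 (fun x => (hasDerivAt_Imap lam x).continuousAt)
  have hfixκ : Imap lam κ = κ := by
    have h := Imap_sub lam κ
    rw [hκ] at h
    simp only [sub_self, zero_mul] at h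
    linarith
  have hfix_iff : ∀ c : ℝ, 0 ≤ c → (Imap lam c = c ↔ c = κ) := by
    intro c _
    constructor
    · intro h
      have hd : ((1 - lam/2) - g c) * (phi c / (1 - Phi c)) = 0 := by
        rw [← Imap_sub]; linarith
      have hpos : 0 < phi c / (1 - Phi c) := div_pos (phi_pos c) (one_sub_Phi_pos c)
      have hgc : g c = 1 - lam/2 := by
        rcases mul_eq_zero.1 hd with h' | h'
        · linarith
        · exact absurd h' hpos.ne'
      exact g_strictMono.injective (by rw [hgc, hκ])
    · rintro rfl; exact hfixκ
  have hbelow : ∀ c : ℝ, 0 < c → c < κ → c < Imap lam c ∧ Imap lam c < κ := by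
    intro c _ hcκ
    have hg : g c < g κ := g_strictMono hcκ
    have h' : 0 < (1 - lam/2) - g c := by rw [← hκ]; linarith
    have hpos : 0 < phi c / (1 - Phi c) := div_pos (phi_pos c) (one_sub_Phi_pos c)
    refine ⟨by nlinarith [Imap_sub lam c, mul_pos h' hpos], ?_⟩
    calc Imap lam c < Imap lam κ := hSM hcκ
      _ = κ := hfixκ
  have habove : ∀ c : ℝ, κ < c → κ < Imap lam c ∧ Imap lam c < c := by
    intro c hκc
    have hg : g κ < g c := g_strictMono hκc
    have h' : (1 - lam/2) - g c < 0 := by rw [← hκ]; linarith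
    have hpos : 0 < phi c / (1 - Phi c) := div_pos (phi_pos c) (one_sub_Phi_pos c)
    refine ⟨?_, by nlinarith [Imap_sub lam c, mul_neg_of_neg_of_pos h' hpos]⟩
    calc κ = Imap lam κ := hfixκ.symm
      _ < Imap lam c := hSM hκc
  have hle : ∀ c : ℝ, c ≤ κ → c ≤ Imap lam c := by
    intro c hcκ
    have hg : g c ≤ g κ := g_strictMono.monotone hcκ
    have h' : 0 ≤ (1 - lam/2) - g c := by rw [← hκ]; linarith
    have hpos : (0:ℝ) ≤ phi c / (1 - Phi c) := (div_pos (phi_pos c) (one_sub_Phi_pos c)).le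
    nlinarith [Imap_sub lam c, mul_nonneg h' hpos]
  have hge : ∀ c : ℝ, κ ≤ c → Imap lam c ≤ c := by
    intro c hκc
    have hg : g κ ≤ g c := g_strictMono.monotone hκc
    have h' : (1 - lam/2) - g c ≤ 0 := by rw [← hκ]; linarith
    have hpos : (0:ℝ) ≤ phi c / (1 - Phi c) := (div_pos (phi_pos c) (one_sub_Phi_pos c)).le
    nlinarith [Imap_sub lam c, mul_nonpos_of_nonpos_of_nonneg h' hpos]
  have hup : ∀ c₀ : ℝ, 0 ≤ c₀ → c₀ ≤ κ →
      Filter.Tendsto (fun k => (Imap lam)^[k] c₀) Filter.atTop (nhds κ) ∧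
        Monotone (fun k => (Imap lam)^[k] c₀) := by
    intro c₀ h0' hκ'
    set s : ℕ → ℝ := fun k => (Imap lam)^[k] c₀ with hs
    have hs_succ : ∀ k, s (k+1) = Imap lam (s k) := fun k => Function.iterate_succ_apply' _ _ _
    have hs_le : ∀ k, s k ≤ κ := by
      intro k; induction k with
      | zero => simpa [hs] using hκ'
      | succ n ih =>
        rw [hs_succ]
        calc Imap lam (s n) ≤ Imap lam κ := hSM.monotone ih
          _ = κ := hfixκ
    have hmono : Monotone s :=
      monotone_nat_of_le_succ (fun k => by rw [hs_succ]; exact hle _ (hs_le k))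
    have hbdd : BddAbove (Set.range s) := ⟨κ, by rintro x ⟨k, rfl⟩; exact hs_le k⟩
    have htend := tendsto_atTop_ciSup hmono hbdd
    set L := ⨆ k, s k with hL
    have hL0 : 0 ≤ L := le_trans h0' (by simpa [hs] using le_ciSup hbdd 0)
    have hLfix : Imap lam L = L := by
      have h1 : Filter.Tendsto (fun k => s (k+1)) Filter.atTop (nhds L) :=
        (tendsto_add_atTop_iff_nat 1).2 htend
      have h2 : Filter.Tendsto (fun k => Imap lam (s k)) Filter.atTop (nhds (Imap lam L)) :=
        (hFcont.tendsto L).comp htend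
      exact tendsto_nhds_unique (h2.congr (fun k => (hs_succ k).symm)) h1
    have hLκ : L = κ := (hfix_iff L hL0).1 hLfix
    exact ⟨hLκ ▸ htend, hmono⟩
  have hdown : ∀ c₀ : ℝ, κ ≤ c₀ →
      Filter.Tendsto (fun k => (Imap lam)^[k] c₀) Filter.atTop (nhds κ) ∧
        Antitone (fun k => (Imap lam)^[k] c₀) := by
    intro c₀ hκ'
    set s : ℕ → ℝ := fun k => (Imap lam)^[k] c₀ with hs
    have hs_succ : ∀ k, s (k+1) = Imap lam (s k) := fun k => Function.iterate_succ_apply' _ _ _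
    have hs_ge : ∀ k, κ ≤ s k := by
      intro k; induction k with
      | zero => simpa [hs] using hκ'
      | succ n ih =>
        rw [hs_succ]
        calc κ = Imap lam κ := hfixκ.symm
          _ ≤ Imap lam (s n) := hSM.monotone ih
    have hanti : Antitone s :=
      antitone_nat_of_succ_le (fun k => by rw [hs_succ]; exact hge _ (hs_ge k))
    have hbdd : BddBelow (Set.range s) := ⟨κ, by rintro x ⟨k, rfl⟩; exact hs_ge k⟩
    have htend := tendsto_atTop_ciInf hanti hbdd
    set L := ⨅ k, s k with hL
    have hL0 : 0 ≤ L := le_trans hκpos.le (le_ciInf (fun k => hs_ge k))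
    have hLfix : Imap lam L = L := by
      have h1 : Filter.Tendsto (fun k => s (k+1)) Filter.atTop (nhds L) :=
        (tendsto_add_atTop_iff_nat 1).2 htend
      have h2 : Filter.Tendsto (fun k => Imap lam (s k)) Filter.atTop (nhds (Imap lam L)) :=
        (hFcont.tendsto L).comp htend
      exact tendsto_nhds_unique (h2.congr (fun k => (hs_succ k).symm)) h1
    have hLκ : L = κ := (hfix_iff L hL0).1 hLfix
    exact ⟨hLκ ▸ htend, hanti⟩
  refine ⟨hSM, Imap_pos lam 0 h2, hfix_iff, hbelow, habove, ?_⟩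
  intro c₀ hc₀
  rcases le_total c₀ κ with h | h
  · obtain ⟨ht, hm⟩ := hup c₀ hc₀ h
    refine ⟨ht, fun _ => hm, fun hκc => ?_⟩
    have hEq : c₀ = κ := le_antisymm h hκc
    subst hEq
    have hconst : ∀ k, (Imap lam)^[k] c₀ = c₀ := by
      intro k; induction k with
      | zero => rfl
      | succ n ih => rw [Function.iterate_succ_apply', ih, hfixκ]
    intro i j _
    simp only [hconst]
    exact le_refl _
  · obtain ⟨ht, hm⟩ := hdown c₀ h
    refine ⟨ht, fun hcκ => ?_, fun _ => hm⟩
    have hEq : c₀ = κ := le_antisymm hcκ h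
    subst hEq
    have hconst : ∀ k, (Imap lam)^[k] c₀ = c₀ := by
      intro k; induction k with
      | zero => rfl
      | succ n ih => rw [Function.iterate_succ_apply', ih, hfixκ]
    intro i j _
    simp only [hconst]
    exact le_refl _
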